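/- Let A be an n×n real matrix, D an m×m real matrix, and B an n×m real matrix. For every s ∈ ℝ, the matrix exponential of the block upper-triangular matrix satisfies exp(s · fromBlocks A B 0 D) = fromBlocks (exp(sA)) (∫_{u=0}^{s} exp((s−u)A) · B · exp(uD) du) 0 (exp(sD)). -/

import Mathlib

open Matrix NormedSpace
open scoped Matrix.Norms.L2Operator

section aux
variable {n m : ℕ}

noncomputable def blkTL (n m : ℕ) :
    Matrix (Fin n) (Fin n) ℝ →L[ℝ] Matrix (Fin n ⊕ Fin m) (Fin n ⊕ Fin m) ℝ :=
  LinearMap.toContinuousLinearMap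
    { toFun := fun a => Matrix.fromBlocks a 0 0 0
      map_add' := fun a b => by rw [Matrix.fromBlocks_add]; simp
      map_smul' := fun r a => by simp [Matrix.fromBlocks_smul] }

noncomputable def blkTR (n m : ℕ) :
    Matrix (Fin n) (Fin m) ℝ →L[ℝ] Matrix (Fin n ⊕ Fin m) (Fin n ⊕ Fin m) ℝ :=
  LinearMap.toContinuousLinearMap
    { toFun := fun a => Matrix.fromBlocks 0 a 0 0
      map_add' := fun a b => by rw [Matrix.fromBlocks_add]; simp
      map_smul' := fun r a => by simp [Matrix.fromBlocks_smul] }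

noncomputable def blkBR (n m : ℕ) :
    Matrix (Fin m) (Fin m) ℝ →L[ℝ] Matrix (Fin n ⊕ Fin m) (Fin n ⊕ Fin m) ℝ :=
  LinearMap.toContinuousLinearMap
    { toFun := fun a => Matrix.fromBlocks 0 0 0 a
      map_add' := fun a b => by rw [Matrix.fromBlocks_add]; simp
      map_smul' := fun r a => by simp [Matrix.fromBlocks_smul] }

theorem hasDerivAt_fromBlocks {f' : Matrix (Fin n) (Fin n) ℝ} {g' : Matrix (Fin n) (Fin m) ℝ}
    {k' : Matrix (Fin m) (Fin m) ℝ} {F : ℝ → Matrix (Fin n) (Fin n) ℝ}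
    {G : ℝ → Matrix (Fin n) (Fin m) ℝ} {K : ℝ → Matrix (Fin m) (Fin m) ℝ} {t : ℝ}
    (hf : HasDerivAt F f' t) (hg : HasDerivAt G g' t) (hk : HasDerivAt K k' t) :
    HasDerivAt (fun t => Matrix.fromBlocks (F t) (G t) 0 (K t))
      (Matrix.fromBlocks f' g' 0 k') t := by
  have h := (((blkTL n m).hasFDerivAt.comp_hasDerivAt t hf).add
    ((blkTR n m).hasFDerivAt.comp_hasDerivAt t hg)).add
    ((blkBR n m).hasFDerivAt.comp_hasDerivAt t hk)
  have e : ∀ (a : Matrix (Fin n) (Fin n) ℝ) (b : Matrix (Fin n) (Fin m) ℝ)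
      (d : Matrix (Fin m) (Fin m) ℝ),
      blkTL n m a + blkTR n m b + blkBR n m d = Matrix.fromBlocks a b 0 d := by
    intro a b d
    simp [blkTL, blkTR, blkBR, Matrix.fromBlocks_add]
  have hfun : (⇑(blkTL n m) ∘ F + ⇑(blkTR n m) ∘ G + ⇑(blkBR n m) ∘ K) =
      fun t => Matrix.fromBlocks (F t) (G t) 0 (K t) := by
    funext x; simp only [Pi.add_apply, Function.comp_apply, e]
  rw [hfun, e] at h
  exact h

end aux

section aux2
variable {p q : Type*} [Fintype p] [DecidableEq p] [Fintype q] [DecidableEq q]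

theorem exp_smul_mul_exp_smul (X : Matrix p p ℝ) (t u : ℝ) :
    exp (t • X) * exp (u • X) = exp ((t + u) • X) := by
  rw [add_smul, Matrix.exp_add_of_commute _ _ (((Commute.refl X).smul_left t).smul_right u)]

theorem hasDerivAt_expA (X : Matrix p p ℝ) (t : ℝ) :
    HasDerivAt (fun t : ℝ => exp (t • X)) (X * exp (t • X)) t :=
  hasDerivAt_exp_smul_const' X t

/-- Left-multiplication by a rectangular-compatible matrix, as a continuous bilinear map. -/
noncomputable def mulCLM (p q : Type*) [Fintype p] [DecidableEq p] [Fintype q] [DecidableEq q] :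
    Matrix p p ℝ →L[ℝ]
      Matrix p q ℝ →L[ℝ] Matrix p q ℝ :=
  LinearMap.toContinuousLinearMap
    { toFun := fun C => LinearMap.toContinuousLinearMap
        { toFun := fun X => C * X
          map_add' := fun X Y => Matrix.mul_add C X Y
          map_smul' := fun r X => (Matrix.mul_smul C r X : C * (r • X) = r • (C * X)) }
      map_add' := fun C C' => by
        apply ContinuousLinearMap.ext
        intro X
        simp [Matrix.add_mul]
      map_smul' := fun r C => by
        apply ContinuousLinearMap.ext
        intro X
        simp [Matrix.smul_mul] }

@[simp] theorem mulCLM_apply (C : Matrix p p ℝ) (X : Matrix p q ℝ) :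
    mulCLM p q C X = C * X := rfl

theorem HasDerivAt.matrix_mul {C : ℝ → Matrix p p ℝ}
    {X : ℝ → Matrix p q ℝ} {C' : Matrix p p ℝ}
    {X' : Matrix p q ℝ} {t : ℝ}
    (hC : HasDerivAt C C' t) (hX : HasDerivAt X X' t) :
    HasDerivAt (fun t => C t * X t) (C' * X t + C t * X') t := by
  have h := HasDerivAt.clm_apply (@HasFDerivAt.comp_hasDerivAt ℝ _ (Matrix p p ℝ) _ _
    (Matrix p q ℝ →L[ℝ] Matrix p q ℝ) _ _ C C' t _ _ (mulCLM p q).hasFDerivAt hC) hX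
  simpa using h

theorem continuous_matrix_exp_smul (X : Matrix p p ℝ) (c : ℝ) :
    Continuous (fun t : ℝ => exp ((c * t) • X)) :=
  (continuous_iff_continuousAt.2 fun x => (exp_analytic (𝕂 := ℝ) x).continuousAt).comp (((continuous_const.mul continuous_id).smul continuous_const))

end aux2

noncomputable def auxH (n m : ℕ) (A : Matrix (Fin n) (Fin n) ℝ) (D : Matrix (Fin m) (Fin m) ℝ)
    (B : Matrix (Fin n) (Fin m) ℝ) (t : ℝ) : Matrix (Fin n) (Fin m) ℝ :=
  ∫ u in (0:ℝ)..t, exp ((-u) • A) * B * exp (u • D)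

noncomputable def auxG (n m : ℕ) (A : Matrix (Fin n) (Fin n) ℝ) (D : Matrix (Fin m) (Fin m) ℝ)
    (B : Matrix (Fin n) (Fin m) ℝ) (t : ℝ) : Matrix (Fin n) (Fin m) ℝ :=
  exp (t • A) * auxH n m A D B t

noncomputable def auxF (n m : ℕ) (A : Matrix (Fin n) (Fin n) ℝ) (D : Matrix (Fin m) (Fin m) ℝ)
    (B : Matrix (Fin n) (Fin m) ℝ) (t : ℝ) : Matrix (Fin n ⊕ Fin m) (Fin n ⊕ Fin m) ℝ :=
  Matrix.fromBlocks (exp (t • A)) (auxG n m A D B t) 0 (exp (t • D))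


/-- The matrix exponential of a block upper-triangular matrix:
`exp (s • fromBlocks A B 0 D)` has diagonal blocks `exp (s•A)`, `exp (s•D)`,
top-right block `∫_{0}^{s} exp((s−u)A) * B * exp(uD) du`, and zero bottom-left block. -/
theorem exp_fromBlocks_upper_triangular
    (n m : ℕ) (A : Matrix (Fin n) (Fin n) ℝ) (D : Matrix (Fin m) (Fin m) ℝ)
    (B : Matrix (Fin n) (Fin m) ℝ) (s : ℝ) :
    exp (s • Matrix.fromBlocks A B 0 D) =
      Matrix.fromBlocks (exp (s • A))
        (∫ u in (0:ℝ)..s, exp ((s - u) • A) * B * exp (u • D))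
        0 (exp (s • D)) := by
  set M : Matrix (Fin n ⊕ Fin m) (Fin n ⊕ Fin m) ℝ := Matrix.fromBlocks A B 0 D with hM
  -- continuity of the inner integrand
  have hcont : Continuous (fun u : ℝ => exp ((-u) • A) * B * exp (u • D)) := by
    have h1 : Continuous (fun u : ℝ => exp ((-u) • A)) := by
      have := continuous_matrix_exp_smul A (-1); simpa [neg_one_mul] using this
    have h2 : Continuous (fun u : ℝ => exp (u • D)) := by
      have := continuous_matrix_exp_smul D 1; simpa using this
    exact (h1.matrix_mul continuous_const).matrix_mul h2
  -- derivative of H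
  have hHderiv : ∀ t : ℝ, HasDerivAt (auxH n m A D B)
      (exp ((-t) • A) * B * exp (t • D)) t := fun t =>
    intervalIntegral.integral_hasDerivAt_right (hcont.intervalIntegrable _ _)
      (hcont.stronglyMeasurableAtFilter _ _) hcont.continuousAt
  -- derivative of G
  have hGderiv : ∀ t : ℝ, HasDerivAt (auxG n m A D B)
      (A * auxG n m A D B t + B * exp (t • D)) t := by
    intro t
    have h := (hasDerivAt_expA A t).matrix_mul (hHderiv t)
    have key : exp (t • A) * (exp ((-t) • A) * B * exp (t • D)) = B * exp (t • D) := by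
      rw [← Matrix.mul_assoc, ← Matrix.mul_assoc, exp_smul_mul_exp_smul, add_neg_cancel,
        zero_smul, exp_zero, Matrix.one_mul]
    have e : A * auxG n m A D B t + B * exp (t • D) =
        A * exp (t • A) * auxH n m A D B t +
          exp (t • A) * (exp ((-t) • A) * B * exp (t • D)) := by
      rw [key, auxG, Matrix.mul_assoc]
    rw [e]
    exact h
  -- derivative of F
  have hFderiv : ∀ t : ℝ, HasDerivAt (auxF n m A D B) (M * auxF n m A D B t) t := by
    intro t
    have h := hasDerivAt_fromBlocks (hasDerivAt_expA A t) (hGderiv t) (hasDerivAt_expA D t)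
    have e : M * auxF n m A D B t =
        Matrix.fromBlocks (A * exp (t • A)) (A * auxG n m A D B t + B * exp (t • D)) 0
          (D * exp (t • D)) := by
      rw [hM, auxF, Matrix.fromBlocks_multiply]
      simp
    rw [e]
    exact h
  -- the function exp(t • (-M)) * F t is constant
  have hΦ : ∀ t : ℝ, HasDerivAt (fun t => exp (t • (-M)) * auxF n m A D B t) 0 t := by
    intro t
    have h := (hasDerivAt_expA (-M) t).matrix_mul (hFderiv t)
    have hc : (-M) * exp (t • (-M)) = exp (t • (-M)) * (-M) :=
      (((Commute.refl (-M)).smul_right t).exp_right).eq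
    have e : (0 : Matrix (Fin n ⊕ Fin m) (Fin n ⊕ Fin m) ℝ) =
        -M * exp (t • (-M)) * auxF n m A D B t +
          exp (t • (-M)) * (M * auxF n m A D B t) := by
      rw [hc, Matrix.mul_assoc, Matrix.neg_mul, Matrix.mul_neg, neg_add_cancel]
    rw [show (0 : Matrix (Fin n ⊕ Fin m) (Fin n ⊕ Fin m) ℝ) = _ from e]
    exact h
  have hconst : exp (s • (-M)) * auxF n m A D B s =
      exp ((0:ℝ) • (-M)) * auxF n m A D B 0 :=
    is_const_of_deriv_eq_zero (fun x => (hΦ x).differentiableAt) (fun x => (hΦ x).deriv) s 0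
  have hF0 : auxF n m A D B 0 = 1 := by
    rw [auxF, auxG, auxH]
    simp [Matrix.fromBlocks_one]
  have hΦ0 : exp (s • (-M)) * auxF n m A D B s = 1 := by
    rw [hconst, hF0, zero_smul, exp_zero, one_mul]
  have h2 : exp (s • M) * exp (s • (-M)) = 1 := by
    rw [smul_neg, ← neg_smul, exp_smul_mul_exp_smul, add_neg_cancel, zero_smul, exp_zero]
  have hFs : auxF n m A D B s = exp (s • M) :=
    calc auxF n m A D B s = 1 * auxF n m A D B s := (one_mul _).symm
      _ = exp (s • M) * (exp (s • (-M)) * auxF n m A D B s) := by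
          rw [← h2, Matrix.mul_assoc]
      _ = exp (s • M) := by rw [hΦ0, mul_one]
  -- identify the stated integral with G s
  have hint : (∫ u in (0:ℝ)..s, exp ((s - u) • A) * B * exp (u • D)) = auxG n m A D B s := by
    have h1 : (∫ u in (0:ℝ)..s, exp ((s - u) • A) * B * exp (u • D)) =
        ∫ u in (0:ℝ)..s, exp (s • A) * (exp ((-u) • A) * B * exp (u • D)) := by
      apply intervalIntegral.integral_congr
      intro u _
      dsimp only
      rw [← Matrix.mul_assoc, ← Matrix.mul_assoc, exp_smul_mul_exp_smul, ← sub_eq_add_neg]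
    rw [h1, auxG, auxH]
    have h3 := ContinuousLinearMap.intervalIntegral_comp_comm
      ((mulCLM (Fin n) (Fin m)) (exp (s • A))) (μ := MeasureTheory.volume) (a := (0:ℝ)) (b := s)
      (hcont.intervalIntegrable _ _)
    simpa using h3
  rw [hint, ← hFs, auxF]
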